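/- Let K be a field, ℓ ≥ 1, and let f₁,…,fₙ ∈ K[x₁,…,x_ℓ] be nonzero homogeneous linear forms that are pairwise non-proportional. If there exists an injective K-algebra homomorphism from the localization K[x₁,…,x_ℓ][1/(f₁·f₂⋯fₙ)] into the Laurent polynomial ring K[t₁^{±1},…,t_ℓ^{±1}], then the forms f₁,…,fₙ are linearly independent over K. -/

import Mathlib

open Finsupp

section Aux

variable {K G : Type*} [Field K] [AddCommGroup G] [LinearOrder G] [IsOrderedAddMonoid G]

lemma aux_mul_apply_max {u v : AddMonoidAlgebra K G} {a b : G}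
    (ha : ∀ x ∈ u.coeff.support, x ≤ a) (hb : ∀ x ∈ v.coeff.support, x ≤ b) :
    (u * v).coeff (a + b) = u.coeff a * v.coeff b := by
  classical
  rw [AddMonoidAlgebra.coeff_mul]
  simp_rw [Finsupp.sum]
  rw [Finset.sum_eq_single a, Finset.sum_eq_single b, if_pos rfl]
  · intro y hy hne
    exact if_neg fun he => hne (add_left_cancel he)
  · intro h
    rw [if_pos rfl, Finsupp.notMem_support_iff.1 h, mul_zero]
  · intro x hx hne
    refine Finset.sum_eq_zero fun y hy => if_neg fun he => ?_
    exact (add_lt_add_of_lt_of_le ((ha x hx).lt_of_ne hne) (hb y hy)).ne he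
  · intro h
    refine Finset.sum_eq_zero fun y _ => ite_eq_right_iff.mpr fun _ => ?_
    rw [Finsupp.notMem_support_iff.1 h, zero_mul]

lemma aux_mul_apply_min {u v : AddMonoidAlgebra K G} {a b : G}
    (ha : ∀ x ∈ u.coeff.support, a ≤ x) (hb : ∀ x ∈ v.coeff.support, b ≤ x) :
    (u * v).coeff (a + b) = u.coeff a * v.coeff b := by
  classical
  rw [AddMonoidAlgebra.coeff_mul]
  simp_rw [Finsupp.sum]
  rw [Finset.sum_eq_single a, Finset.sum_eq_single b, if_pos rfl]
  · intro y hy hne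
    exact if_neg fun he => hne (add_left_cancel he)
  · intro h
    rw [if_pos rfl, Finsupp.notMem_support_iff.1 h, mul_zero]
  · intro x hx hne
    refine Finset.sum_eq_zero fun y hy => if_neg fun he => ?_
    exact (add_lt_add_of_lt_of_le ((ha x hx).lt_of_ne (Ne.symm hne)) (hb y hy)).ne' he
  · intro h
    refine Finset.sum_eq_zero fun y _ => ite_eq_right_iff.mpr fun _ => ?_
    rw [Finsupp.notMem_support_iff.1 h, zero_mul]

lemma aux_unit_single {u : AddMonoidAlgebra K G} (hu : IsUnit u) :
    ∃ (a : G) (c : K), c ≠ 0 ∧ u = AddMonoidAlgebra.single a c := by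
  obtain ⟨⟨u, v, huv, -⟩, rfl⟩ := hu
  have hu0 : u ≠ 0 := by rintro rfl; simp at huv
  have hv0 : v ≠ 0 := by rintro rfl; simp at huv
  have hune := Finsupp.support_nonempty_iff.2 (mt AddMonoidAlgebra.coeff_eq_zero.1 hu0)
  have hvne := Finsupp.support_nonempty_iff.2 (mt AddMonoidAlgebra.coeff_eq_zero.1 hv0)
  set A1 := u.coeff.support.max' hune with hA1def
  set A0 := u.coeff.support.min' hune with hA0def
  set B1 := v.coeff.support.max' hvne with hB1def
  set B0 := v.coeff.support.min' hvne with hB0def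
  have key : ∀ x : G, (1 : AddMonoidAlgebra K G).coeff x ≠ 0 → x = 0 := by
    intro x hx
    by_contra h
    exact hx (by rw [AddMonoidAlgebra.one_def, AddMonoidAlgebra.coeff_single, Finsupp.single_apply,
      if_neg (Ne.symm h)])
  have hmax : (u * v).coeff (A1 + B1) = u.coeff A1 * v.coeff B1 :=
    aux_mul_apply_max (fun x hx => Finset.le_max' _ _ hx) (fun x hx => Finset.le_max' _ _ hx)
  have hmin : (u * v).coeff (A0 + B0) = u.coeff A0 * v.coeff B0 :=
    aux_mul_apply_min (fun x hx => Finset.min'_le _ _ hx) (fun x hx => Finset.min'_le _ _ hx)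
  have hne1 : u.coeff A1 * v.coeff B1 ≠ 0 :=
    mul_ne_zero (Finsupp.mem_support_iff.1 (u.coeff.support.max'_mem hune))
      (Finsupp.mem_support_iff.1 (v.coeff.support.max'_mem hvne))
  have hne0 : u.coeff A0 * v.coeff B0 ≠ 0 :=
    mul_ne_zero (Finsupp.mem_support_iff.1 (u.coeff.support.min'_mem hune))
      (Finsupp.mem_support_iff.1 (v.coeff.support.min'_mem hvne))
  rw [huv] at hmax hmin
  have h1 : A1 + B1 = 0 := key _ (by rw [hmax]; exact hne1)
  have h0 : A0 + B0 = 0 := key _ (by rw [hmin]; exact hne0)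
  have hA : A1 = A0 := by
    have h01 : A0 ≤ A1 := Finset.min'_le _ _ (u.coeff.support.max'_mem hune)
    have h01' : B0 ≤ B1 := Finset.min'_le _ _ (v.coeff.support.max'_mem hvne)
    have hle : A1 + B0 ≤ A0 + B0 := by
      calc A1 + B0 ≤ A1 + B1 := add_le_add_right h01' _
        _ = 0 := h1
        _ = A0 + B0 := h0.symm
    exact le_antisymm (le_of_add_le_add_right hle) h01
  refine ⟨A1, u.coeff A1, Finsupp.mem_support_iff.1 (u.coeff.support.max'_mem hune), ?_⟩
  have hsupp : u.coeff.support = {A1} := by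
    apply Finset.Subset.antisymm
    · intro x hx
      rw [Finset.mem_singleton]
      exact le_antisymm (Finset.le_max' _ _ hx) (hA ▸ Finset.min'_le _ _ hx)
    · simpa using u.coeff.support.max'_mem hune
  exact AddMonoidAlgebra.coeff_injective (by
    rw [AddMonoidAlgebra.coeff_single]; exact (Finsupp.support_eq_singleton.1 hsupp).2)

end Aux

/-- If the coordinate ring `K[x₁,…,x_ℓ][1/(f₁⋯fₙ)]` of the complement of the hyperplane
arrangement defined by nonzero pairwise non-proportional linear forms `f₁,…,fₙ` embeds
as a `K`-algebra into the Laurent polynomial ring `K[t₁^±1,…,t_ℓ^±1]`, then the forms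
`f₁,…,fₙ` are linearly independent over `K`. -/
theorem linearIndependent_of_embedding_into_laurent
    {K : Type*} [Field K] (ℓ n : ℕ) (hℓ : 1 ≤ ℓ)
    (f : Fin n → MvPolynomial (Fin ℓ) K)
    (hhom : ∀ i, (f i).IsHomogeneous 1)
    (hf0 : ∀ i, f i ≠ 0)
    (hfp : ∀ i j, i ≠ j → ∀ c : K, f i ≠ c • f j)
    (φ : Localization.Away (∏ i, f i) →ₐ[K] AddMonoidAlgebra K (Fin ℓ → ℤ))
    (hφ : Function.Injective φ) :
    LinearIndependent K f := by
  classical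
  have hP : (∏ i, f i) ≠ 0 := Finset.prod_ne_zero_iff.2 fun i _ => hf0 i
  have halg : Function.Injective
      (algebraMap (MvPolynomial (Fin ℓ) K) (Localization.Away (∏ i, f i))) :=
    IsLocalization.injective _ (powers_le_nonZeroDivisors_of_noZeroDivisors hP)
  set ψ : MvPolynomial (Fin ℓ) K →ₐ[K] AddMonoidAlgebra K (Fin ℓ → ℤ) :=
    φ.comp (IsScalarTower.toAlgHom K (MvPolynomial (Fin ℓ) K)
      (Localization.Away (∏ i, f i))) with hψdef
  have hψ : Function.Injective ψ := fun x y h => halg (hφ h)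
  have hPunit : IsUnit (ψ (∏ i, f i)) := by
    have h1 : IsUnit ((algebraMap (MvPolynomial (Fin ℓ) K)
        (Localization.Away (∏ i, f i))) (∏ i, f i)) :=
      IsLocalization.map_units _ ⟨∏ i, f i, Submonoid.mem_powers _⟩
    exact h1.map φ
  have hunit : ∀ i, IsUnit (ψ (f i)) := fun i =>
    isUnit_of_dvd_unit (map_dvd ψ (Finset.dvd_prod_of_mem f (Finset.mem_univ i))) hPunit
  let eL : (Fin ℓ → ℤ) ≃+ Lex (Fin ℓ → ℤ) :=
    { toLex with map_add' := fun _ _ => rfl }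
  let Φ := AddMonoidAlgebra.domCongr K K eL
  have hmono : ∀ i, ∃ (a : Fin ℓ → ℤ) (c : K), c ≠ 0 ∧ ψ (f i) = AddMonoidAlgebra.single a c := by
    intro i
    obtain ⟨a, c, hc, he⟩ := aux_unit_single ((hunit i).map Φ)
    refine ⟨ofLex a, c, hc, ?_⟩
    apply Φ.injective
    rw [he, AddMonoidAlgebra.domCongr_single]
    rfl
  choose a c hc hsingle using hmono
  have ha_inj : Function.Injective a := by
    intro i j hij
    by_contra hne
    apply hfp i j hne (c i / c j)
    apply hψ
    rw [map_smul, hsingle i, hsingle j, AddMonoidAlgebra.smul_single, hij, smul_eq_mul,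
      div_mul_cancel₀ _ (hc j)]
  have hli : LinearIndependent K (fun i => ψ (f i)) := by
    rw [Fintype.linearIndependent_iff]
    intro g hg j
    simp_rw [hsingle] at hg
    have hg2 : (∑ x : Fin n, g x • Finsupp.single (a x) (c x) : (Fin ℓ → ℤ) →₀ K) = 0 := by
      simpa only [AddMonoidAlgebra.coeff_sum, AddMonoidAlgebra.coeff_smul,
        AddMonoidAlgebra.coeff_single, AddMonoidAlgebra.coeff_zero] using
        congrArg AddMonoidAlgebra.coeff hg
    have hg' := DFunLike.congr_fun hg2 (a j)
    simp only [Finsupp.finset_sum_apply, Finsupp.smul_apply, Finsupp.single_apply,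
      smul_eq_mul, Finsupp.coe_zero, Pi.zero_apply] at hg'
    rw [Finset.sum_eq_single j] at hg'
    · rw [if_pos rfl] at hg'
      exact (mul_eq_zero.1 hg').resolve_right (hc j)
    · intro i _ hne
      rw [if_neg fun h => hne (ha_inj h), mul_zero]
    · intro h
      exact absurd (Finset.mem_univ j) h
  exact LinearIndependent.of_comp ψ.toLinearMap hli
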